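/- Fix β > 0 and let F : ℝ → ℝ be a nondecreasing function with 0 ≤ F(s) ≤ 1 for all s, with F(s) → 1 as s → ∞, and satisfying F(k^β · s) = F(s)^{1/k} for every integer k ≥ 1 and every s > 0. Then F(1) > 0 and, with t = log F(1) (so t ≤ 0), F(r) = F(1)^{r^{−1/β}} = exp(t · r^{−1/β}) for all r > 0. -/
import Mathlib

/-- Analytic core of Lemma 2.9: a nondecreasing function `F : ℝ → [0,1]`
tending to `1` at `+∞` and satisfying `F (k^β s) = F s ^ (1/k)` for all
integers `k ≥ 1` and all `s > 0` satisfies `F 1 > 0` and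
`F r = exp (log (F 1) · r^{-1/β})` for all `r > 0`. -/
theorem cdf_functional_equation
    (β : ℝ) (hβ : 0 < β)
    (F : ℝ → ℝ)
    (hmono : Monotone F)
    (hbd : ∀ s : ℝ, 0 ≤ F s ∧ F s ≤ 1)
    (hlim : Filter.Tendsto F Filter.atTop (nhds 1))
    (heq : ∀ k : ℕ, 1 ≤ k → ∀ s : ℝ, 0 < s →
      F ((k : ℝ) ^ β * s) = (F s) ^ ((1 : ℝ) / k)) :
    0 < F 1 ∧ ∀ r : ℝ, 0 < r →
      F r = Real.exp (Real.log (F 1) * r ^ (-1 / β)) := by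
  classical
  -- there is a point where F is at least 1/2
  obtain ⟨s₀, hs₀⟩ : ∃ s₀ : ℝ, 1/2 ≤ F s₀ := by
    have h := hlim.eventually (eventually_ge_nhds (by norm_num : (1:ℝ)/2 < 1))
    exact h.exists
  -- F 1 > 0
  have hF1pos : 0 < F 1 := by
    rcases lt_or_ge 0 (F 1) with h | h
    · exact h
    exfalso
    have hF1 : F 1 = 0 := le_antisymm h (hbd 1).1
    set M : ℝ := max s₀ 1 with hM
    have hMpos : 0 < M := lt_of_lt_of_le one_pos (le_max_right _ _)
    obtain ⟨k, hk⟩ := exists_nat_ge (max 1 (M ^ β⁻¹))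
    have hk1 : 1 ≤ k := by
      have : (1:ℝ) ≤ (k:ℝ) := le_trans (le_max_left _ _) hk
      exact_mod_cast this
    have hkM : M ≤ (k:ℝ) ^ β := by
      have h1 : M ^ β⁻¹ ≤ (k:ℝ) := le_trans (le_max_right _ _) hk
      have h2 : (M ^ β⁻¹) ^ β ≤ (k:ℝ) ^ β :=
        Real.rpow_le_rpow (Real.rpow_nonneg hMpos.le _) h1 hβ.le
      rwa [Real.rpow_inv_rpow hMpos.le hβ.ne'] at h2
    have hs₀k : s₀ ≤ (k:ℝ) ^ β := le_trans (le_max_left _ _) hkM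
    have := heq k hk1 1 one_pos
    rw [mul_one, hF1, Real.zero_rpow (by positivity : (1:ℝ)/(k:ℝ) ≠ 0)] at this
    have hle : (1:ℝ)/2 ≤ F ((k:ℝ) ^ β) := le_trans hs₀ (hmono hs₀k)
    rw [this] at hle
    norm_num at hle
  refine ⟨hF1pos, ?_⟩
  set t : ℝ := Real.log (F 1) with ht
  -- key identity on positive rationals
  have hkey : ∀ q : ℚ, 0 < q → F ((q:ℝ) ^ β) = Real.exp (t * (q:ℝ)⁻¹) := by
    intro q hq
    set m : ℕ := q.num.toNat with hmdef
    set k : ℕ := q.den with hkdef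
    have hm : 1 ≤ m := by
      have : 0 < q.num := Rat.num_pos.mpr hq
      omega
    have hk : 1 ≤ k := q.pos
    have hqcast : (q:ℝ) = (m:ℝ) / (k:ℝ) := by
      rw [Rat.cast_def]
      congr 1
      exact_mod_cast (Int.toNat_of_nonneg (le_of_lt (Rat.num_pos.mpr hq))).symm
    have hkpos : (0:ℝ) < (k:ℝ) := by exact_mod_cast hk
    have hqpos : (0:ℝ) < (q:ℝ) := by exact_mod_cast hq
    have hmul : (k:ℝ) * (q:ℝ) = (m:ℝ) := by
      rw [hqcast]; field_simp
    have h1 : F ((m:ℝ) ^ β * 1) = F 1 ^ ((1:ℝ)/m) := heq m hm 1 one_pos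
    have h2 : F ((k:ℝ) ^ β * (q:ℝ) ^ β) = F ((q:ℝ) ^ β) ^ ((1:ℝ)/k) :=
      heq k hk _ (Real.rpow_pos_of_pos hqpos β)
    have h3 : (k:ℝ) ^ β * (q:ℝ) ^ β = (m:ℝ) ^ β := by
      rw [← Real.mul_rpow hkpos.le hqpos.le, hmul]
    rw [mul_one] at h1
    rw [h3, h1] at h2
    -- raise both sides to the k-th power
    have hA : 0 ≤ F ((q:ℝ) ^ β) := (hbd _).1
    have h4 : F ((q:ℝ) ^ β) = (F 1 ^ ((1:ℝ)/m)) ^ (k:ℝ) := by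
      have := congrArg (fun y : ℝ => y ^ (k:ℝ)) h2.symm
      simpa [← Real.rpow_natCast, ← Real.rpow_mul hA,
        one_div, inv_mul_cancel₀ hkpos.ne'] using this
    rw [h4, ← Real.rpow_mul (le_of_lt hF1pos),
      Real.rpow_def_of_pos hF1pos, ← ht]
    congr 1
    rw [hqcast]
    field_simp
  intro r hr
  set x : ℝ := r ^ β⁻¹ with hx
  have hxpos : 0 < x := Real.rpow_pos_of_pos hr _
  have hxr : x ^ β = r := Real.rpow_inv_rpow hr.le hβ.ne'
  -- lower bound from rationals below x
  have hlow : ∀ q : ℚ, 0 < q → (q:ℝ) ≤ x → Real.exp (t * (q:ℝ)⁻¹) ≤ F r := by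
    intro q hq hle
    rw [← hkey q hq, ← hxr]
    exact hmono (Real.rpow_le_rpow (by exact_mod_cast hq.le) hle hβ.le)
  have hup : ∀ q : ℚ, x ≤ (q:ℝ) → F r ≤ Real.exp (t * (q:ℝ)⁻¹) := by
    intro q hle
    have hq : 0 < q := by exact_mod_cast lt_of_lt_of_le hxpos hle
    rw [← hkey q hq, ← hxr]
    exact hmono (Real.rpow_le_rpow hxpos.le hle hβ.le)
  -- choose rational sequences converging to x from below and above
  have hselL : ∀ n : ℕ, ∃ q : ℚ, max (x - 1/((n:ℝ)+1)) (x/2) < (q:ℝ) ∧ (q:ℝ) < x := by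
    intro n
    apply exists_rat_btwn
    apply max_lt
    · have : (0:ℝ) < 1/((n:ℝ)+1) := by positivity
      linarith
    · linarith
  have hselU : ∀ n : ℕ, ∃ q : ℚ, x < (q:ℝ) ∧ (q:ℝ) < x + 1/((n:ℝ)+1) := by
    intro n
    apply exists_rat_btwn
    have : (0:ℝ) < 1/((n:ℝ)+1) := by positivity
    linarith
  choose u hu1 hu2 using hselL
  choose v hv1 hv2 using hselU
  have htendL : Filter.Tendsto (fun n : ℕ => ((u n : ℝ))) Filter.atTop (nhds x) := by
    have hL : Filter.Tendsto (fun n : ℕ => max (x - 1/((n:ℝ)+1)) (x/2)) Filter.atTop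
        (nhds x) := by
      have h1 : Filter.Tendsto (fun n : ℕ => x - 1/((n:ℝ)+1)) Filter.atTop (nhds (x - 0)) :=
        Filter.Tendsto.const_sub _ tendsto_one_div_add_atTop_nhds_zero_nat
      have h2 := h1.max (tendsto_const_nhds (x := x/2) (f := Filter.atTop (α := ℕ)))
      rw [sub_zero, max_eq_left (by linarith : x/2 ≤ x)] at h2
      exact h2
    exact tendsto_of_tendsto_of_tendsto_of_le_of_le hL tendsto_const_nhds
      (fun n => (hu1 n).le) (fun n => (hu2 n).le)
  have htendU : Filter.Tendsto (fun n : ℕ => ((v n : ℝ))) Filter.atTop (nhds x) := by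
    have hU : Filter.Tendsto (fun n : ℕ => x + 1/((n:ℝ)+1)) Filter.atTop (nhds (x + 0)) :=
      Filter.Tendsto.const_add _ tendsto_one_div_add_atTop_nhds_zero_nat
    rw [add_zero] at hU
    exact tendsto_of_tendsto_of_tendsto_of_le_of_le tendsto_const_nhds hU
      (fun n => (hv1 n).le) (fun n => (hv2 n).le)
  have hexpL : Filter.Tendsto (fun n : ℕ => Real.exp (t * ((u n : ℝ))⁻¹)) Filter.atTop
      (nhds (Real.exp (t * x⁻¹))) :=
    (Real.continuous_exp.tendsto _).comp (tendsto_const_nhds.mul (htendL.inv₀ hxpos.ne'))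
  have hexpU : Filter.Tendsto (fun n : ℕ => Real.exp (t * ((v n : ℝ))⁻¹)) Filter.atTop
      (nhds (Real.exp (t * x⁻¹))) :=
    (Real.continuous_exp.tendsto _).comp (tendsto_const_nhds.mul (htendU.inv₀ hxpos.ne'))
  have hge : Real.exp (t * x⁻¹) ≤ F r := by
    refine le_of_tendsto hexpL (Filter.Eventually.of_forall fun n => ?_)
    have hqpos : 0 < u n := by
      have : (0:ℝ) < (u n : ℝ) :=
        lt_of_le_of_lt (le_trans (by linarith : (0:ℝ) ≤ x/2) (le_max_right _ _)) (hu1 n)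
      exact_mod_cast this
    exact hlow (u n) hqpos (hu2 n).le
  have hle : F r ≤ Real.exp (t * x⁻¹) := by
    refine ge_of_tendsto hexpU (Filter.Eventually.of_forall fun n => ?_)
    exact hup (v n) (hv1 n).le
  have hfr : F r = Real.exp (t * x⁻¹) := le_antisymm hle hge
  rw [hfr]
  congr 1
  rw [neg_div, one_div, Real.rpow_neg hr.le, hx]
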